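/- For a population z ∈ {0,1}^m with mean μ(z) = (1/m)∑_i z_i, if S_n denotes the sum of n samples drawn uniformly without replacement from z, then Pr[(1/n) S_n ≥ μ(z) + kν/m] ≤ exp(-2ν² n k² / (m(k+1))), where k = m - n; in particular the bound is independent of μ(z). -/

import Mathlib

open BigOperators Finset

lemma hoeffding_bernoulli (p : ℝ) (hp0 : 0 ≤ p) (hp1 : p ≤ 1) (θ : ℝ) :
    p * Real.exp (θ * (1 - p)) + (1 - p) * Real.exp (-θ * p) ≤ Real.exp (θ ^ 2 / 8) := by
  obtain ⟨q, hq0, hpq, hq⟩ : ∃ q : ℝ, 0 ≤ q ∧ p + q = 1 ∧ q = 1 - p :=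
    ⟨1 - p, by linarith, by ring, rfl⟩
  have pos : ∀ x : ℝ, 0 < p * Real.exp x + q := by
    intro x
    rcases eq_or_lt_of_le hp0 with h | h
    · simp [← h]; linarith
    · have := Real.exp_pos x
      nlinarith
  set F : ℝ → ℝ := fun x => x ^ 2 / 8 + x * p - Real.log (p * Real.exp x + q) with hF
  set F' : ℝ → ℝ := fun x => x / 4 + p - p * Real.exp x / (p * Real.exp x + q) with hF'
  have hdF : ∀ x, HasDerivAt F (F' x) x := by
    intro x
    have h1 : HasDerivAt (fun x : ℝ => p * Real.exp x + q) (p * Real.exp x) x := by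
      simpa using ((Real.hasDerivAt_exp x).const_mul p).add_const q
    have h2 : HasDerivAt (fun x : ℝ => Real.log (p * Real.exp x + q))
        (p * Real.exp x / (p * Real.exp x + q)) x := h1.log (pos x).ne'
    have h3 : HasDerivAt (fun x : ℝ => x ^ 2 / 8 + x * p) (x / 4 + p) x := by
      have := ((hasDerivAt_pow 2 x).div_const 8).add ((hasDerivAt_id x).mul_const p)
      refine this.congr_deriv ?_; norm_num; ring
    exact h3.sub h2
  have hdF' : ∀ x, HasDerivAt F'
      (1 / 4 - p * q * Real.exp x / (p * Real.exp x + q) ^ 2) x := by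
    intro x
    have h1 : HasDerivAt (fun x : ℝ => p * Real.exp x + q) (p * Real.exp x) x := by
      simpa using ((Real.hasDerivAt_exp x).const_mul p).add_const q
    have h2 : HasDerivAt (fun x : ℝ => p * Real.exp x) (p * Real.exp x) x := by
      simpa using (Real.hasDerivAt_exp x).const_mul p
    have h3 : HasDerivAt (fun x : ℝ => p * Real.exp x / (p * Real.exp x + q))
        ((p * Real.exp x * (p * Real.exp x + q) - p * Real.exp x * (p * Real.exp x)) /
          (p * Real.exp x + q) ^ 2) x := h2.div h1 (pos x).ne'
    have h4 : HasDerivAt (fun x : ℝ => x / 4 + p) (1 / 4) x := by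
      simpa using ((hasDerivAt_id x).div_const 4).add_const p
    have := h4.sub h3
    refine this.congr_deriv ?_
    ring
  have hF''nonneg : ∀ x, 0 ≤ 1 / 4 - p * q * Real.exp x / (p * Real.exp x + q) ^ 2 := by
    intro x
    rw [sub_nonneg, div_le_iff₀ (pow_pos (pos x) 2)]
    nlinarith [sq_nonneg (p * Real.exp x - q), Real.exp_pos x,
      mul_nonneg (mul_nonneg hp0 hq0) (Real.exp_pos x).le]
  have hF'mono : Monotone F' :=
    monotone_of_deriv_nonneg (fun x => (hdF' x).differentiableAt) (fun x => by
      rw [(hdF' x).deriv]; exact hF''nonneg x)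
  have hF'0 : F' 0 = 0 := by
    simp [hF', hpq]
  have hFnonneg : ∀ x, 0 ≤ F x := by
    intro x
    have hF0 : F 0 = 0 := by simp [hF, hpq]
    rcases le_total 0 x with hx | hx
    · have hmono : MonotoneOn F (Set.Ici 0) := by
        apply monotoneOn_of_deriv_nonneg (convex_Ici 0)
          (Continuous.continuousOn (by
            fun_prop (disch := intro x; exact (pos x).ne')))
          (fun y _ => (hdF y).differentiableAt.differentiableWithinAt)
        intro y hy
        rw [interior_Ici] at hy
        rw [(hdF y).deriv]
        calc (0:ℝ) = F' 0 := hF'0.symm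
          _ ≤ F' y := hF'mono (le_of_lt hy)
      have := hmono Set.self_mem_Ici (Set.mem_Ici.2 hx) hx
      linarith [hF0 ▸ this]
    · have hanti : AntitoneOn F (Set.Iic 0) := by
        apply antitoneOn_of_deriv_nonpos (convex_Iic 0)
          (Continuous.continuousOn (by
            fun_prop (disch := intro x; exact (pos x).ne')))
          (fun y _ => (hdF y).differentiableAt.differentiableWithinAt)
        intro y hy
        rw [interior_Iic] at hy
        rw [(hdF y).deriv]
        calc F' y ≤ F' 0 := hF'mono (le_of_lt hy)
          _ = 0 := hF'0
      have := hanti (Set.mem_Iic.2 hx) Set.self_mem_Iic hx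
      linarith [hF0 ▸ this]
  have key : Real.log (p * Real.exp θ + q) ≤ θ ^ 2 / 8 + θ * p := by
    have := hFnonneg θ
    simp only [hF] at this
    linarith
  have h5 : p * Real.exp θ + q ≤ Real.exp (θ ^ 2 / 8 + θ * p) :=
    calc p * Real.exp θ + q = Real.exp (Real.log (p * Real.exp θ + q)) :=
          (Real.exp_log (pos θ)).symm
      _ ≤ _ := Real.exp_le_exp.2 key
  have expand : p * Real.exp (θ * (1 - p)) + (1 - p) * Real.exp (-θ * p)
      = Real.exp (-(θ * p)) * (p * Real.exp θ + q) := by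
    rw [show θ * (1 - p) = -(θ * p) + θ by ring, show -θ * p = -(θ * p) by ring,
      Real.exp_add, hq]
    ring
  rw [expand]
  calc Real.exp (-(θ * p)) * (p * Real.exp θ + q)
      ≤ Real.exp (-(θ * p)) * Real.exp (θ ^ 2 / 8 + θ * p) := by
        exact mul_le_mul_of_nonneg_left h5 (Real.exp_pos _).le
    _ = Real.exp (θ ^ 2 / 8) := by rw [← Real.exp_add]; ring_nf

lemma sum_powersetCard_succ {m : ℕ} (j : ℕ) (f : Finset (Fin m) → ℝ) :
    ((j + 1 : ℕ) : ℝ) * ∑ t ∈ powersetCard (j + 1) (univ : Finset (Fin m)), f t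
      = ∑ s ∈ powersetCard j (univ : Finset (Fin m)), ∑ i ∈ sᶜ, f (insert i s) := by
  have h1 : ∑ s ∈ powersetCard j (univ : Finset (Fin m)), ∑ i ∈ sᶜ, f (insert i s)
      = ∑ t ∈ powersetCard (j + 1) (univ : Finset (Fin m)), ∑ i ∈ t, f t := by
    rw [← Finset.sum_sigma (powersetCard j (univ : Finset (Fin m))) (fun s => sᶜ)
      (fun x => f (insert x.2 x.1)),
      ← Finset.sum_sigma (powersetCard (j + 1) (univ : Finset (Fin m))) (fun t => t)
      (fun x => f x.1)]
    apply Finset.sum_nbij' (fun x => ⟨insert x.2 x.1, x.2⟩) (fun x => ⟨x.1.erase x.2, x.2⟩)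
    · rintro ⟨s, i⟩ hx
      rw [Finset.mem_sigma] at hx
      obtain ⟨hs, hi⟩ := hx
      rw [Finset.mem_compl] at hi
      rw [Finset.mem_powersetCard] at hs
      rw [Finset.mem_sigma, Finset.mem_powersetCard]
      exact ⟨⟨Finset.subset_univ _, by rw [Finset.card_insert_of_notMem hi, hs.2]⟩,
        Finset.mem_insert_self _ _⟩
    · rintro ⟨t, i⟩ hx
      rw [Finset.mem_sigma] at hx
      obtain ⟨ht, hi⟩ := hx
      rw [Finset.mem_powersetCard] at ht
      rw [Finset.mem_sigma, Finset.mem_powersetCard]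
      refine ⟨⟨Finset.subset_univ _, ?_⟩, Finset.mem_compl.2 (Finset.notMem_erase _ _)⟩
      rw [Finset.card_erase_of_mem hi, ht.2]
      simp
    · rintro ⟨s, i⟩ hx
      rw [Finset.mem_sigma] at hx
      have hi : i ∉ s := Finset.mem_compl.1 hx.2
      simp [Finset.erase_insert hi]
    · rintro ⟨t, i⟩ hx
      rw [Finset.mem_sigma] at hx
      simp [Finset.insert_erase hx.2]
    · rintro ⟨s, i⟩ _
      rfl
  rw [h1, Finset.mul_sum]
  apply Finset.sum_congr rfl
  intro t ht
  rw [Finset.sum_const, (Finset.mem_powersetCard.1 ht).2, nsmul_eq_mul]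

noncomputable def serf (m : ℕ) (z : Fin m → ℝ) (c : ℝ) (j : ℕ) : ℝ :=
  (m.choose j : ℝ)⁻¹ * ∑ s ∈ powersetCard j (univ : Finset (Fin m)),
    Real.exp (c * ((∑ i ∈ s, z i) - j * (∑ i, z i) / m) / (m - j))

lemma serf_step (m : ℕ) (z : Fin m → ℝ) (hz : ∀ i, z i = 0 ∨ z i = 1) (c : ℝ)
    (j : ℕ) (hj : j + 1 < m) :
    serf m z c (j + 1) ≤ serf m z c j * Real.exp (c ^ 2 / (8 * ((m : ℝ) - j - 1) ^ 2)) := by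
  set M : ℝ := ∑ i, z i with hM
  set a : ℝ := (m : ℝ) - j with ha
  have hjm : (j : ℝ) + 1 < m := by exact_mod_cast hj
  have ha1 : 1 < a := by rw [ha]; linarith
  have ha0 : 0 < a := by linarith
  have ham1 : 0 < a - 1 := by linarith
  have hm0 : (0:ℝ) < m := by linarith [Nat.cast_nonneg (α := ℝ) j]
  set θ : ℝ := c / (a - 1) with hθ
  -- pointwise inner bound, for s of card j
  have inner : ∀ s ∈ powersetCard j (univ : Finset (Fin m)),
      ∑ i ∈ sᶜ, Real.exp (c * ((∑ i' ∈ insert i s, z i') - (j+1:ℕ) * M / m) / (m - (j+1:ℕ)))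
        ≤ a * Real.exp (θ ^ 2 / 8) *
          Real.exp (c * ((∑ i' ∈ s, z i') - j * M / m) / (m - j)) := by
    intro s hs
    rw [Finset.mem_powersetCard] at hs
    set S : ℝ := ∑ i' ∈ s, z i' with hS
    set p : ℝ := (M - S) / a with hp
    have hcardc : (sᶜ.card : ℝ) = a := by
      rw [Finset.card_compl, hs.2, Fintype.card_fin, Nat.cast_sub (by omega : j ≤ m), ha]
    have hMS : ∑ i ∈ sᶜ, z i = M - S := by
      have := Finset.sum_add_sum_compl s z
      rw [hS, hM]; linarith
    have hMS0 : 0 ≤ M - S := by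
      rw [← hMS]; exact Finset.sum_nonneg fun i _ => by rcases hz i with h|h <;> simp [h]
    have hMSa : M - S ≤ a := by
      rw [← hMS, ← hcardc]
      calc ∑ i ∈ sᶜ, z i ≤ ∑ i ∈ sᶜ, 1 :=
            Finset.sum_le_sum fun i _ => by rcases hz i with h|h <;> simp [h]
        _ = (sᶜ.card : ℝ) := by simp
    have hp0 : 0 ≤ p := div_nonneg hMS0 ha0.le
    have hp1 : p ≤ 1 := by rw [hp, div_le_one ha0]; linarith
    -- exponent identity
    have key : ∀ i ∈ sᶜ,
        c * ((∑ i' ∈ insert i s, z i') - (j+1:ℕ) * M / m) / (m - (j+1:ℕ))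
          = c * (S - j * M / m) / (m - j) + θ * (z i - p) := by
      intro i hi
      have hins : ∑ i' ∈ insert i s, z i' = z i + S :=
        Finset.sum_insert (Finset.mem_compl.1 hi)
      rw [hins]
      push_cast
      rw [show ((m:ℝ) - (j + 1)) = a - 1 by rw [ha]; ring, show ((m:ℝ) - j) = a from rfl,
        hθ, hp]
      field_simp
      ring
    calc ∑ i ∈ sᶜ, Real.exp (c * ((∑ i' ∈ insert i s, z i') - (j+1:ℕ) * M / m) / (m - (j+1:ℕ)))
        = ∑ i ∈ sᶜ, Real.exp (c * (S - j * M / m) / (m - j)) * Real.exp (θ * (z i - p)) := by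
          refine Finset.sum_congr rfl fun i hi => ?_
          rw [key i hi, Real.exp_add, hS]
      _ = Real.exp (c * (S - j * M / m) / (m - j)) * ∑ i ∈ sᶜ, Real.exp (θ * (z i - p)) := by
          rw [← Finset.mul_sum]
      _ ≤ Real.exp (c * (S - j * M / m) / (m - j)) * (a * Real.exp (θ ^ 2 / 8)) := by
          refine mul_le_mul_of_nonneg_left ?_ (Real.exp_pos _).le
          have hpt : ∀ i ∈ sᶜ, Real.exp (θ * (z i - p))
              = z i * Real.exp (θ * (1 - p)) + (1 - z i) * Real.exp (-θ * p) := by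
            intro i _
            rcases hz i with h|h <;> simp [h] <;> ring_nf
          calc ∑ i ∈ sᶜ, Real.exp (θ * (z i - p))
              = ∑ i ∈ sᶜ, (z i * Real.exp (θ * (1 - p)) + (1 - z i) * Real.exp (-θ * p)) :=
                Finset.sum_congr rfl hpt
            _ = (M - S) * Real.exp (θ * (1 - p)) + (a - (M - S)) * Real.exp (-θ * p) := by
                rw [Finset.sum_add_distrib, ← Finset.sum_mul, ← Finset.sum_mul, hMS]
                have h2 : ∑ i ∈ sᶜ, (1 - z i) = a - (M - S) := by
                  rw [Finset.sum_sub_distrib, Finset.sum_const, hMS, nsmul_eq_mul, hcardc,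
                    mul_one]
                rw [h2]
            _ = a * (p * Real.exp (θ * (1 - p)) + (1 - p) * Real.exp (-θ * p)) := by
                rw [hp]; field_simp; try ring
            _ ≤ a * Real.exp (θ ^ 2 / 8) :=
                mul_le_mul_of_nonneg_left (hoeffding_bernoulli p hp0 hp1 θ) ha0.le
      _ = a * Real.exp (θ ^ 2 / 8) * Real.exp (c * ((∑ i' ∈ s, z i') - j * M / m) / (m - j)) := by
          rw [hS]; ring
  -- combine
  have hjle : j + 1 ≤ m := hj.le
  have hc1 : (0:ℝ) < (m.choose (j+1) : ℝ) := by exact_mod_cast Nat.choose_pos hjle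
  have hc0 : (0:ℝ) < (m.choose j : ℝ) := by exact_mod_cast Nat.choose_pos (by omega : j ≤ m)
  have hj1 : (0:ℝ) < ((j+1:ℕ) : ℝ) := by positivity
  have hcc : ((m.choose (j+1)):ℝ) * ((j+1:ℕ):ℝ) = ((m.choose j):ℝ) * a := by
    rw [← Nat.cast_mul, Nat.choose_succ_right_eq, Nat.cast_mul,
      Nat.cast_sub (by omega : j ≤ m), ha]
  have hsum := sum_powersetCard_succ (m := m) j
    (fun t => Real.exp (c * ((∑ i' ∈ t, z i') - (j+1:ℕ) * M / m) / (m - (j+1:ℕ))))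
  have hstep : ∑ s ∈ powersetCard j (univ : Finset (Fin m)),
      ∑ i ∈ sᶜ, Real.exp (c * ((∑ i' ∈ insert i s, z i') - (j+1:ℕ) * M / m) / (m - (j+1:ℕ)))
      ≤ ∑ s ∈ powersetCard j (univ : Finset (Fin m)),
        a * Real.exp (θ ^ 2 / 8) * Real.exp (c * ((∑ i' ∈ s, z i') - j * M / m) / (m - j)) :=
    Finset.sum_le_sum inner
  have hθ2 : θ ^ 2 / 8 = c ^ 2 / (8 * ((m:ℝ) - j - 1) ^ 2) := by
    rw [hθ, div_pow, div_div, mul_comm ((a-1)^2) 8, show (m:ℝ) - j - 1 = a - 1 by rw [ha]]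
  have hscal : ((m.choose (j+1):ℝ))⁻¹ * (((j+1:ℕ):ℝ))⁻¹ * a = ((m.choose j):ℝ)⁻¹ := by
    have hcc' : (↑(m.choose (j+1)):ℝ) * ((j:ℝ)+1) = ↑(m.choose j) * a := by
      push_cast at hcc ⊢; linarith
    field_simp
    nlinarith [hcc']
  calc serf m z c (j + 1)
      = ((m.choose (j+1):ℝ))⁻¹ * (((j+1:ℕ):ℝ))⁻¹ *
        ∑ s ∈ powersetCard j (univ : Finset (Fin m)), ∑ i ∈ sᶜ,
          Real.exp (c * ((∑ i' ∈ insert i s, z i') - (j+1:ℕ) * M / m) / (m - (j+1:ℕ))) := by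
        rw [serf, ← hM, ← hsum]
        rw [mul_assoc]
        rw [inv_mul_cancel_left₀ hj1.ne']
    _ ≤ ((m.choose (j+1):ℝ))⁻¹ * (((j+1:ℕ):ℝ))⁻¹ *
        ∑ s ∈ powersetCard j (univ : Finset (Fin m)),
          a * Real.exp (θ ^ 2 / 8) * Real.exp (c * ((∑ i' ∈ s, z i') - j * M / m) / (m - j)) := by
        exact mul_le_mul_of_nonneg_left hstep (by positivity)
    _ = serf m z c j * Real.exp (c ^ 2 / (8 * ((m : ℝ) - j - 1) ^ 2)) := by
        rw [← Finset.mul_sum, serf, ← hM, ← hθ2, ← hscal]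
        ring

lemma serf_zero (m : ℕ) (z : Fin m → ℝ) (c : ℝ) : serf m z c 0 = 1 := by
  simp [serf]

lemma serf_nonneg (m : ℕ) (z : Fin m → ℝ) (c : ℝ) (j : ℕ) : 0 ≤ serf m z c j := by
  unfold serf
  positivity

lemma serf_bound (m : ℕ) (z : Fin m → ℝ) (hz : ∀ i, z i = 0 ∨ z i = 1) (c : ℝ) :
    ∀ n, n < m →
    serf m z c n ≤ Real.exp (c ^ 2 / 8 * ∑ i ∈ Finset.range n, (1 / ((m:ℝ) - i - 1) ^ 2)) := by
  intro n
  induction n with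
  | zero => intro _; simp [serf_zero]
  | succ n ih =>
    intro h
    have hn : n < m := by omega
    calc serf m z c (n + 1)
        ≤ serf m z c n * Real.exp (c ^ 2 / (8 * ((m : ℝ) - n - 1) ^ 2)) :=
          serf_step m z hz c n h
      _ ≤ Real.exp (c ^ 2 / 8 * ∑ i ∈ Finset.range n, (1 / ((m:ℝ) - i - 1) ^ 2)) *
          Real.exp (c ^ 2 / (8 * ((m : ℝ) - n - 1) ^ 2)) :=
          mul_le_mul_of_nonneg_right (ih hn) (Real.exp_pos _).le
      _ = Real.exp (c ^ 2 / 8 * ∑ i ∈ Finset.range (n+1), (1 / ((m:ℝ) - i - 1) ^ 2)) := by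
          rw [← Real.exp_add, Finset.sum_range_succ]
          congr 1
          have h2 : (n:ℝ) + 1 < m := by exact_mod_cast h
          have h1 : ((m:ℝ) - n - 1) ^ 2 ≠ 0 := by nlinarith
          field_simp

lemma telescope_bound (m n : ℕ) (hnm : n < m) :
    ∑ i ∈ Finset.range n, (1 / ((m:ℝ) - i - 1) ^ 2)
      ≤ (((m:ℝ) - n) + 1) * n / ((m:ℝ) * ((m:ℝ) - n) ^ 2) := by
  set k : ℝ := (m:ℝ) - n with hk
  have hnm' : (n:ℝ) < m := by exact_mod_cast hnm
  have hk1 : 1 ≤ k := by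
    have : (n:ℝ) + 1 ≤ m := by exact_mod_cast hnm
    rw [hk]; linarith
  have hk0 : 0 < k := by linarith
  have hm0 : (0:ℝ) < m := lt_of_le_of_lt (Nat.cast_nonneg n) hnm'
  calc ∑ i ∈ Finset.range n, (1 / ((m:ℝ) - i - 1) ^ 2)
      ≤ ∑ i ∈ Finset.range n, (k + 1) / k *
          (((m:ℝ) - (i+1:ℕ))⁻¹ - ((m:ℝ) - (i:ℕ))⁻¹) := by
        refine Finset.sum_le_sum fun i hi => ?_
        rw [Finset.mem_range] at hi
        have hin : (i:ℝ) + 1 ≤ n := by exact_mod_cast hi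
        set b : ℝ := (m:ℝ) - i - 1 with hb
        have hbk : k ≤ b := by rw [hb, hk]; linarith
        have hb0 : 0 < b := by linarith
        have e1 : ((m:ℝ) - (i+1:ℕ)) = b := by push_cast; rw [hb]; ring
        have e2 : ((m:ℝ) - (i:ℕ)) = b + 1 := by push_cast; rw [hb]; ring
        rw [e1, e2]
        have e3 : b⁻¹ - (b+1)⁻¹ = 1 / (b * (b+1)) := by
          field_simp
          ring
        rw [e3]
        rw [div_mul_div_comm, div_le_div_iff₀ (by positivity) (by positivity)]
        nlinarith
    _ = (k + 1) / k * (((m:ℝ) - (n:ℕ))⁻¹ - ((m:ℝ) - (0:ℕ))⁻¹) := by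
        rw [← Finset.mul_sum]
        congr 1
        exact Finset.sum_range_sub (fun i => ((m:ℝ) - (i:ℕ))⁻¹) n
    _ = (k + 1) * n / ((m:ℝ) * k ^ 2) := by
        push_cast
        rw [← hk]
        have hmkn : (m:ℝ) = k + n := by rw [hk]; ring
        field_simp
        rw [sub_zero]
        field_simp
        linarith

/-- Serfling's bound. For a population `z ∈ {0,1}^m` with mean
`μ(z) = (1/m) ∑ᵢ zᵢ`, sampling `n` entries uniformly without replacement (equivalently,
a uniform size-`n` subset `s`), the probability that the sample mean exceeds `μ(z) + kν/m`
is at most `exp(-2ν²nk²/(m(k+1)))`, where `k = m - n`; the bound is independent of `μ(z)`. -/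
theorem stmt2 (m n : ℕ) (hn : 0 < n) (hnm : n ≤ m)
    (z : Fin m → ℝ) (hz : ∀ i, z i = 0 ∨ z i = 1) (ν : ℝ) (hν : 0 < ν) :
    ∑ s ∈ Finset.powersetCard n (Finset.univ : Finset (Fin m)),
      ((m.choose n : ℝ))⁻¹ *
        (if (∑ i, z i) / m + ((m - n : ℕ) : ℝ) * ν / m ≤ (∑ i ∈ s, z i) / n then 1 else 0)
      ≤ Real.exp (-(2 * ν ^ 2 * n * ((m - n : ℕ) : ℝ) ^ 2) / (m * (((m - n : ℕ) : ℝ) + 1))) := by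
  have hC : (0:ℝ) < (m.choose n : ℝ) := by exact_mod_cast Nat.choose_pos hnm
  rcases eq_or_lt_of_le hnm with heq | hlt
  · -- n = m : bound is exp 0 = 1 and LHS ≤ 1
    have hk0 : (m - n : ℕ) = 0 := by omega
    rw [hk0]
    simp only [Nat.cast_zero]
    rw [show -(2 * ν ^ 2 * (n:ℝ) * (0:ℝ) ^ 2) / ((m:ℝ) * ((0:ℝ) + 1)) = 0 by ring,
      Real.exp_zero]
    calc ∑ s ∈ Finset.powersetCard n (Finset.univ : Finset (Fin m)),
        ((m.choose n : ℝ))⁻¹ * (if (∑ i, z i) / m + 0 * ν / m ≤ (∑ i ∈ s, z i) / n then 1 else 0)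
        ≤ ∑ s ∈ Finset.powersetCard n (Finset.univ : Finset (Fin m)), ((m.choose n : ℝ))⁻¹ * 1 :=
          Finset.sum_le_sum fun s _ => by
            apply mul_le_mul_of_nonneg_left _ (by positivity)
            split <;> norm_num
      _ = 1 := by
          rw [Finset.sum_const, Finset.card_powersetCard, card_univ, Fintype.card_fin,
            nsmul_eq_mul, mul_one, mul_inv_cancel₀ hC.ne']
  · -- main case n < m
    set M : ℝ := ∑ i, z i with hM
    have hm0 : (0:ℝ) < m := by
      have : (n:ℝ) < m := by exact_mod_cast hlt
      linarith [Nat.cast_nonneg (α := ℝ) n]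
    have hkcast : ((m - n : ℕ) : ℝ) = (m:ℝ) - n := by
      rw [Nat.cast_sub hnm]
    set k : ℝ := (m:ℝ) - n with hk
    have hk1 : 1 ≤ k := by
      have : (n:ℝ) + 1 ≤ m := by exact_mod_cast hlt
      rw [hk]; linarith
    have hk0 : 0 < k := by linarith
    have hn0 : (0:ℝ) < n := by exact_mod_cast hn
    set c : ℝ := 4 * k ^ 2 * ν / (k + 1) with hc
    have hc0 : 0 < c := by rw [hc]; positivity
    -- pointwise Chernoff
    have point : ∀ s ∈ Finset.powersetCard n (Finset.univ : Finset (Fin m)),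
        (if M / m + ((m - n : ℕ) : ℝ) * ν / m ≤ (∑ i ∈ s, z i) / n then (1:ℝ) else 0)
          ≤ Real.exp (-(c * n * ν / m)) *
            Real.exp (c * ((∑ i ∈ s, z i) - n * M / m) / ((m:ℝ) - n)) := by
      intro s _
      rw [← Real.exp_add]
      split
      · rename_i hev
        rw [hkcast] at hev
        set S : ℝ := ∑ i ∈ s, z i with hS
        have h3 : (n:ℝ) * (S / n) = S := mul_div_cancel₀ _ hn0.ne'
        have h2 : (n:ℝ) * (M / m) + n * (k * ν / m) ≤ S := by
          nlinarith [mul_le_mul_of_nonneg_left hev hn0.le, h3]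
        have h4 : (n:ℝ) * ν / m * k ≤ S - n * M / m := by
          have e1 : (n:ℝ) * (M / m) = n * M / m := by ring
          have e2 : (n:ℝ) * (k * ν / m) = n * ν / m * k := by ring
          linarith [h2]
        have h5 : c * (n * ν / m) ≤ c * ((S - n * M / m) / k) := by
          apply mul_le_mul_of_nonneg_left _ hc0.le
          rw [le_div_iff₀ hk0]
          exact h4
        apply Real.one_le_exp
        have e6 : -(c * (n:ℝ) * ν / m) + c * (S - n * M / m) / ((m:ℝ) - n)
            = c * ((S - n * M / m) / k) - c * ((n:ℝ) * ν / m) := by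
          rw [← hk]; ring
        rw [e6, sub_nonneg]
        exact h5
      · positivity
    -- sum up
    have hch : ∑ s ∈ Finset.powersetCard n (Finset.univ : Finset (Fin m)),
        ((m.choose n : ℝ))⁻¹ *
          (if M / m + ((m - n : ℕ) : ℝ) * ν / m ≤ (∑ i ∈ s, z i) / n then (1:ℝ) else 0)
        ≤ Real.exp (-(c * n * ν / m)) * serf m z c n := by
      calc ∑ s ∈ Finset.powersetCard n (Finset.univ : Finset (Fin m)),
          ((m.choose n : ℝ))⁻¹ *
            (if M / m + ((m - n : ℕ) : ℝ) * ν / m ≤ (∑ i ∈ s, z i) / n then (1:ℝ) else 0)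
          ≤ ∑ s ∈ Finset.powersetCard n (Finset.univ : Finset (Fin m)),
            ((m.choose n : ℝ))⁻¹ * (Real.exp (-(c * n * ν / m)) *
              Real.exp (c * ((∑ i ∈ s, z i) - n * M / m) / ((m:ℝ) - n))) :=
            Finset.sum_le_sum fun s hs =>
              mul_le_mul_of_nonneg_left (point s hs) (by positivity)
        _ = Real.exp (-(c * n * ν / m)) * serf m z c n := by
            rw [serf, ← hM]
            rw [← Finset.mul_sum, ← Finset.mul_sum]
            ring
    -- conclude
    have hserf := serf_bound m z hz c n hlt
    have htel := telescope_bound m n hlt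
    rw [← hk] at htel
    have hA : c ^ 2 / 8 * ∑ i ∈ Finset.range n, (1 / ((m:ℝ) - i - 1) ^ 2)
        ≤ c ^ 2 / 8 * ((k + 1) * n / ((m:ℝ) * k ^ 2)) :=
      mul_le_mul_of_nonneg_left htel (by positivity)
    have hfinal : -(c * n * ν / m) + c ^ 2 / 8 * ((k + 1) * n / ((m:ℝ) * k ^ 2))
        = -(2 * ν ^ 2 * n * k ^ 2) / (m * (k + 1)) := by
      rw [hc]
      field_simp
      ring
    calc ∑ s ∈ Finset.powersetCard n (Finset.univ : Finset (Fin m)),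
        ((m.choose n : ℝ))⁻¹ *
          (if M / m + ((m - n : ℕ) : ℝ) * ν / m ≤ (∑ i ∈ s, z i) / n then (1:ℝ) else 0)
        ≤ Real.exp (-(c * n * ν / m)) * serf m z c n := hch
      _ ≤ Real.exp (-(c * n * ν / m)) *
          Real.exp (c ^ 2 / 8 * ∑ i ∈ Finset.range n, (1 / ((m:ℝ) - i - 1) ^ 2)) :=
          mul_le_mul_of_nonneg_left hserf (Real.exp_pos _).le
      _ ≤ Real.exp (-(c * n * ν / m)) *
          Real.exp (c ^ 2 / 8 * ((k + 1) * n / ((m:ℝ) * k ^ 2))) :=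
          mul_le_mul_of_nonneg_left (Real.exp_le_exp.2 hA) (Real.exp_pos _).le
      _ = Real.exp (-(2 * ν ^ 2 * n * k ^ 2) / (m * (k + 1))) := by
          rw [← Real.exp_add, hfinal]
      _ = Real.exp (-(2 * ν ^ 2 * n * ((m - n : ℕ) : ℝ) ^ 2) / (m * (((m - n : ℕ) : ℝ) + 1))) := by
          rw [hkcast]
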